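/- arXiv:2507.00471 — 4 statements merged into one kernel-verified Lean document; each statement's English description precedes it below -/
import Mathlib

section
/- Let n ≥ 1, let w : Fin n → ℝ satisfy w(i) ≥ 1 for all i, and for λ > 0 define the dilation δ_λ : ℝⁿ → ℝⁿ by (δ_λ x)ᵢ = λ^{w(i)}·xᵢ. Let Y : ℝⁿ → ℝⁿ be locally Lipschitz and satisfy the homogeneity property Y(δ_λ x) = λ⁻¹ · δ_λ(Y(x)) for all λ > 0 and x ∈ ℝⁿ. If γ : ℝ → ℝⁿ is differentiable with γ′(t) = Y(γ(t)) for all t ∈ ℝ and γ(0) = 0, then γ(t) = δ_λ(γ(t/λ)) for all t ∈ ℝ and all λ > 0. -/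
open Set Filter Topology

/-- Global uniqueness of solutions of an autonomous ODE with locally Lipschitz RHS. -/
lemma ode_unique_global {E : Type*} [NormedAddCommGroup E] [NormedSpace ℝ E]
    (Y : E → E) (hY : LocallyLipschitz Y) (f g : ℝ → E)
    (hf : ∀ t, HasDerivAt f (Y (f t)) t) (hg : ∀ t, HasDerivAt g (Y (g t)) t)
    (heq : f 0 = g 0) : ∀ t, f t = g t := by
  have hS : {t : ℝ | f t = g t} = univ := by
    apply IsClopen.eq_univ
    · constructor
      · exact isClosed_eq (continuous_iff_continuousAt.mpr fun t => (hf t).continuousAt)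
          (continuous_iff_continuousAt.mpr fun t => (hg t).continuousAt)
      · rw [isOpen_iff_mem_nhds]
        intro t₀ ht₀
        obtain ⟨K, s, hs, hK⟩ := hY (f t₀)
        have hfs : ∀ᶠ t in 𝓝 t₀, HasDerivAt f (Y (f t)) t ∧ f t ∈ s := by
          filter_upwards [(hf t₀).continuousAt.preimage_mem_nhds hs] with t h using ⟨hf t, h⟩
        have hgs : ∀ᶠ t in 𝓝 t₀, HasDerivAt g (Y (g t)) t ∧ g t ∈ s := by
          have : g t₀ ∈ s := ht₀ ▸ mem_of_mem_nhds hs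
          filter_upwards [(hg t₀).continuousAt.preimage_mem_nhds (ht₀ ▸ hs)] with t h
            using ⟨hg t, h⟩
        exact ODE_solution_unique_of_eventually (Filter.Eventually.of_forall fun _ => hK) hfs hgs ht₀
    · exact ⟨0, heq⟩
  intro t
  exact (hS ▸ mem_univ t : t ∈ {t : ℝ | f t = g t})

/-- Blow-up = dilation for flows: if `Y` is locally Lipschitz and `1`-homogeneous with
respect to the weighted dilations `δ_λ(x)ᵢ = λ^{w i} xᵢ` (with weights `w i ≥ 1`), i.e.
`Y(δ_λ x) = λ⁻¹ · δ_λ(Y x)`, and `γ` is an integral curve of `Y` with `γ(0) = 0`, then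
`γ(t) = δ_λ(γ(t/λ))` for all `t ∈ ℝ` and `λ > 0`. -/
theorem statement2 (n : ℕ) (hn : 1 ≤ n) (w : Fin n → ℝ) (hw : ∀ i, 1 ≤ w i)
    (Y : (Fin n → ℝ) → (Fin n → ℝ)) (hY : LocallyLipschitz Y)
    (hhom : ∀ lam : ℝ, 0 < lam → ∀ x : Fin n → ℝ,
      Y (fun i => lam ^ (w i) * x i) = lam⁻¹ • fun i => lam ^ (w i) * Y x i)
    (γ : ℝ → Fin n → ℝ) (hγ : ∀ t : ℝ, HasDerivAt γ (Y (γ t)) t)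
    (h0 : γ 0 = 0) :
    ∀ t : ℝ, ∀ lam : ℝ, 0 < lam →
      γ t = fun i => lam ^ (w i) * γ (t / lam) i := by
  intro t lam hlam
  set σ : ℝ → Fin n → ℝ := fun t => fun i => lam ^ (w i) * γ (t / lam) i with hσ
  have hcomp : ∀ s : ℝ, HasDerivAt (fun u => γ (u / lam)) (lam⁻¹ • Y (γ (s / lam))) s := by
    intro s
    have hd : HasDerivAt (fun u : ℝ => u / lam) lam⁻¹ s := by
      simpa [div_eq_mul_inv] using (hasDerivAt_id s).div_const lam
    exact (hγ (s / lam)).scomp s hd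
  have hσ' : ∀ s : ℝ, HasDerivAt σ (Y (σ s)) s := by
    intro s
    rw [hasDerivAt_pi]
    intro i
    have hi : HasDerivAt (fun u => γ (u / lam) i) (lam⁻¹ * Y (γ (s / lam)) i) s := by
      have := hasDerivAt_pi.mp (hcomp s) i
      simpa using this
    have := hi.const_mul (lam ^ (w i))
    have hYσ : Y (σ s) i = lam⁻¹ * (lam ^ (w i) * Y (γ (s / lam)) i) := by
      rw [hσ]
      rw [hhom lam hlam (γ (s / lam))]
      simp
    rw [hYσ]
    convert this using 1
    · rfl
    · exact mul_left_comm (lam⁻¹ : ℝ) (lam ^ (w i)) (Y (γ (s / lam)) i)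
  have hσ0 : γ 0 = σ 0 := by
    rw [hσ, h0]
    funext i
    simp [h0]
  exact ode_unique_global Y hY γ σ hγ hσ' hσ0 t
end

section
/- For every r > 0 one has −f″(r)/f(r) − G″(r)/G(r) > 0; equivalently, G″(r)/G(r) < (r² + 6)/(4(r² + 1)²), where f(r) = r·(1+r²)^(−1/4) and G(r) = r/arctan r. -/
noncomputable def f (r : ℝ) : ℝ := r * (1 + r ^ 2) ^ (-(1 / 4 : ℝ))

noncomputable def G (r : ℝ) : ℝ := r / Real.arctan r

lemma hu (x : ℝ) : (0:ℝ) < 1 + x ^ 2 := by positivity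

lemma hasDerivAt_quad (x : ℝ) : HasDerivAt (fun y : ℝ => 1 + y ^ 2) (2 * x) x := by
  simpa using (hasDerivAt_pow 2 x).const_add 1

lemma hasDerivAt_upow (p : ℝ) (x : ℝ) :
    HasDerivAt (fun y : ℝ => (1 + y ^ 2) ^ p) (2 * x * p * (1 + x ^ 2) ^ (p - 1)) x :=
  (hasDerivAt_quad x).rpow_const (Or.inl (hu x).ne')

noncomputable def F1 (x : ℝ) : ℝ :=
  1 * (1 + x ^ 2) ^ (-(1 / 4 : ℝ)) +
    x * (2 * x * (-(1 / 4 : ℝ)) * (1 + x ^ 2) ^ (-(1 / 4 : ℝ) - 1))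

lemma hasDerivAt_f (x : ℝ) : HasDerivAt f (F1 x) x :=
  (hasDerivAt_id x).mul (hasDerivAt_upow (-(1 / 4 : ℝ)) x)

lemma deriv_f_eq : deriv f = F1 := funext fun x => (hasDerivAt_f x).deriv

lemma arctan_lb (r : ℝ) (hr : 0 ≤ r) : 3 * r / (3 + r ^ 2) ≤ Real.arctan r := by
  set φ : ℝ → ℝ := fun x => Real.arctan x - 3 * x / (3 + x ^ 2) with hφ
  have hd : ∀ x : ℝ, HasDerivAt φ
      (1 / (1 + x ^ 2) - (3 * (3 + x ^ 2) - 3 * x * (2 * x)) / (3 + x ^ 2) ^ 2) x := by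
    intro x
    have h3 : (0:ℝ) < 3 + x ^ 2 := by positivity
    have h1 : HasDerivAt (fun y : ℝ => 3 + y ^ 2) (2 * x) x := by
      simpa using (hasDerivAt_pow 2 x).const_add 3
    have h2 : HasDerivAt (fun y : ℝ => 3 * y) (3:ℝ) x := by
      simpa using (hasDerivAt_id x).const_mul (3:ℝ)
    exact (Real.hasDerivAt_arctan x).sub (h2.div h1 h3.ne')
  have hmono : Monotone φ := by
    apply monotone_of_deriv_nonneg
    · exact fun x => (hd x).differentiableAt
    · intro x
      rw [(hd x).deriv]
      have h3 : (0:ℝ) < 3 + x ^ 2 := by positivity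
      have h1 : (0:ℝ) < 1 + x ^ 2 := hu x
      rw [sub_nonneg, div_le_div_iff₀ (by positivity) (by positivity)]
      nlinarith [sq_nonneg x, sq_nonneg (x^2)]
  have h0 : φ 0 = 0 := by simp [hφ]
  have := hmono hr
  rw [h0] at this
  have : 0 ≤ Real.arctan r - 3 * r / (3 + r ^ 2) := this
  linarith


lemma arctan_pos' {x : ℝ} (hx : 0 < x) : 0 < Real.arctan x := by
  have := Real.arctan_strictMono hx
  simpa [Real.arctan_zero] using this

noncomputable def G1 (x : ℝ) : ℝ :=
  (1 * Real.arctan x - x * (1 / (1 + x ^ 2))) / Real.arctan x ^ 2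

set_option maxHeartbeats 1000000 in
/-- For `f(r) = r·(1+r²)^{-1/4}` and `G(r) = r/arctan r`:
`−f″/f − G″/G > 0`, equivalently `G″/G < (r²+6)/(4(r²+1)²)`, for all `r > 0`. -/
theorem statement7 :
    ∀ r : ℝ, 0 < r →
      (-(deriv (deriv f) r / f r) - deriv (deriv G) r / G r > 0 ∧
       deriv (deriv G) r / G r < (r ^ 2 + 6) / (4 * (r ^ 2 + 1) ^ 2)) := by
  intro r hr
  have hur : (0:ℝ) < 1 + r ^ 2 := hu r
  have ha : 0 < Real.arctan r := arctan_pos' hr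
  set a := Real.arctan r with ha_def
  -- second derivative of f
  have hC : HasDerivAt (fun y : ℝ => 2 * y * (-(1/4:ℝ)) * (1 + y ^ 2) ^ (-(1/4:ℝ) - 1))
      (2 * (-(1/4:ℝ)) * (1 + r ^ 2) ^ (-(1/4:ℝ) - 1) +
        2 * r * (-(1/4:ℝ)) * (2 * r * (-(1/4:ℝ) - 1) * (1 + r ^ 2) ^ (-(1/4:ℝ) - 1 - 1))) r := by
    have h1 : HasDerivAt (fun y : ℝ => 2 * y * (-(1/4:ℝ))) (2 * (-(1/4:ℝ))) r := by
      simpa using ((hasDerivAt_id r).const_mul (2:ℝ)).mul_const (-(1/4:ℝ))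
    exact h1.mul (hasDerivAt_upow (-(1/4:ℝ) - 1) r)
  have hF1 : HasDerivAt F1
      (1 * (2 * r * (-(1/4:ℝ)) * (1 + r ^ 2) ^ (-(1/4:ℝ) - 1)) +
        (1 * (2 * r * (-(1/4:ℝ)) * (1 + r ^ 2) ^ (-(1/4:ℝ) - 1)) +
          r * (2 * (-(1/4:ℝ)) * (1 + r ^ 2) ^ (-(1/4:ℝ) - 1) +
            2 * r * (-(1/4:ℝ)) * (2 * r * (-(1/4:ℝ) - 1) * (1 + r ^ 2) ^ (-(1/4:ℝ) - 1 - 1))))) r := by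
    unfold F1
    exact ((hasDerivAt_upow (-(1/4:ℝ)) r).const_mul 1).add ((hasDerivAt_id r).mul hC)
  have hP : (0:ℝ) < (1 + r ^ 2) ^ (-(1/4:ℝ)) := Real.rpow_pos_of_pos hur _
  have e1 : (1 + r ^ 2) ^ (-(1/4:ℝ) - 1) = (1 + r ^ 2) ^ (-(1/4:ℝ)) / (1 + r ^ 2) := by
    rw [Real.rpow_sub hur, Real.rpow_one]
  have e2 : (1 + r ^ 2) ^ (-(1/4:ℝ) - 1 - 1)
      = (1 + r ^ 2) ^ (-(1/4:ℝ)) / ((1 + r ^ 2) * (1 + r ^ 2)) := by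
    rw [Real.rpow_sub hur, Real.rpow_one, e1, div_div]
  have hfr : deriv (deriv f) r / f r = -((r ^ 2 + 6) / (4 * (r ^ 2 + 1) ^ 2)) := by
    rw [deriv_f_eq, hF1.deriv]
    unfold f
    rw [e1, e2, div_eq_iff (by positivity)]
    field_simp
    ring
  -- second derivative of G
  have hG1at : ∀ x ∈ Set.Ioi (0:ℝ), HasDerivAt G (G1 x) x := by
    intro x hx
    have hax : Real.arctan x ≠ 0 := (arctan_pos' hx).ne'
    exact (hasDerivAt_id x).div (Real.hasDerivAt_arctan x) hax
  have hev : deriv G =ᶠ[nhds r] G1 := by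
    filter_upwards [isOpen_Ioi.mem_nhds (Set.mem_Ioi.2 hr)] with x hx
    exact (hG1at x hx).deriv
  have hddG : deriv (deriv G) r = deriv G1 r := hev.deriv_eq
  have hinv : HasDerivAt (fun y : ℝ => 1 / (1 + y ^ 2))
      ((0 * (1 + r ^ 2) - 1 * (2 * r)) / (1 + r ^ 2) ^ 2) r :=
    (hasDerivAt_const r (1:ℝ)).div (hasDerivAt_quad r) hur.ne'
  have hN : HasDerivAt (fun x : ℝ => 1 * Real.arctan x - x * (1 / (1 + x ^ 2)))
      (1 * (1 / (1 + r ^ 2)) -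
        (1 * (1 / (1 + r ^ 2)) + r * ((0 * (1 + r ^ 2) - 1 * (2 * r)) / (1 + r ^ 2) ^ 2))) r :=
    ((Real.hasDerivAt_arctan r).const_mul (1:ℝ)).sub ((hasDerivAt_id r).mul hinv)
  have hD : HasDerivAt (fun x : ℝ => Real.arctan x ^ 2)
      (((2:ℕ):ℝ) * Real.arctan r ^ (2 - 1) * (1 / (1 + r ^ 2))) r :=
    (Real.hasDerivAt_arctan r).pow 2
  have hane2 : Real.arctan r ^ 2 ≠ 0 := pow_ne_zero 2 ha.ne'
  have hG1' : HasDerivAt G1 (2 * (r - a) / ((1 + r ^ 2) ^ 2 * a ^ 3)) r := by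
    have h := hN.div hD hane2
    unfold G1
    refine h.congr_deriv ?_
    rw [← ha_def]
    push_cast
    field_simp
    ring
  have hGr : deriv (deriv G) r / G r = 2 * (r - a) / (r * (1 + r ^ 2) ^ 2 * a ^ 2) := by
    rw [hddG, hG1'.deriv]
    unfold G
    rw [← ha_def]
    field_simp
  -- the key inequality : 8 (r - a) < (r^2+6) r a^2
  have hkey : 3 * r ≤ a * (3 + r ^ 2) := by
    have h := arctan_lb r hr.le
    rw [div_le_iff₀ (by positivity)] at h
    linarith [h]
  have hA : (0:ℝ) ≤ r * (r ^ 2 + 6) * ((a * (3 + r ^ 2)) ^ 2 - 9 * r ^ 2) := by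
    have h9 : (3 * r) * (3 * r) ≤ (a * (3 + r ^ 2)) * (a * (3 + r ^ 2)) :=
      mul_self_le_mul_self (by positivity) hkey
    have : (0:ℝ) ≤ (a * (3 + r ^ 2)) ^ 2 - 9 * r ^ 2 := by nlinarith [h9]
    positivity
  have hB : (0:ℝ) ≤ a * (3 + r ^ 2) ^ 2 - 3 * r * (3 + r ^ 2) := by
    have := mul_le_mul_of_nonneg_right hkey (by positivity : (0:ℝ) ≤ 3 + r ^ 2)
    nlinarith [this]
  have hT : 0 < ((r ^ 2 + 6) * r * a ^ 2 - 8 * r + 8 * a) * (3 + r ^ 2) ^ 2 := by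
    nlinarith [hA, hB, pow_pos hr 5, pow_pos hr 3]
  have key8 : 8 * (r - a) < (r ^ 2 + 6) * r * a ^ 2 := by
    rcases mul_pos_iff.mp hT with ⟨h, -⟩ | ⟨-, h⟩
    · linarith
    · exfalso; nlinarith [sq_nonneg (3 + r ^ 2)]
  have goal2 : deriv (deriv G) r / G r < (r ^ 2 + 6) / (4 * (r ^ 2 + 1) ^ 2) := by
    rw [hGr, div_lt_div_iff₀ (by positivity) (by positivity)]
    nlinarith [mul_lt_mul_of_pos_right key8 (by positivity : (0:ℝ) < (1 + r ^ 2) ^ 2)]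
  refine ⟨?_, goal2⟩
  rw [hfr]
  linarith [goal2]
end

section
/- For every r > 0 one has (1 − f′(r)²)/f(r)² − f′(r)·G′(r)/(f(r)·G(r)) > 0, where f(r) = r·(1+r²)^(−1/4) and G(r) = r/arctan r. -/
lemma arctan_pos'_s8 {r : ℝ} (hr : 0 < r) : 0 < Real.arctan r := by
  have := Real.arctan_strictMono hr
  simpa [Real.arctan_zero] using this

lemma arctan_lt_self' {r : ℝ} (hr : 0 < r) : Real.arctan r < r := by
  rcases lt_or_ge r (Real.pi / 2) with h | h
  · have hA : 0 < Real.arctan r := arctan_pos'_s8 hr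
    have hA2 : Real.arctan r < Real.pi / 2 := Real.arctan_lt_pi_div_two r
    have := Real.lt_tan hA hA2
    rwa [Real.tan_arctan] at this
  · exact lt_of_lt_of_le (Real.arctan_lt_pi_div_two r) h

/-- For `f(r) = r·(1+r²)^{-1/4}` and `G(r) = r/arctan r`:
`(1 − (f′)²)/f² − f′G′/(fG) > 0` for all `r > 0`. -/
theorem statement8 :
    ∀ r : ℝ, 0 < r →
      (1 - (deriv f r) ^ 2) / (f r) ^ 2
        - deriv f r * deriv G r / (f r * G r) > 0 := by
  intro r hr
  have h0 : (0:ℝ) < 1 + r ^ 2 := by positivity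
  set v : ℝ := (1 + r ^ 2) ^ (-(1 / 4 : ℝ)) with hvdef
  set A : ℝ := Real.arctan r with hAdef
  have hv : 0 < v := Real.rpow_pos_of_pos h0 _
  have hA : 0 < A := arctan_pos'_s8 hr
  have hAr : A < r := arctan_lt_self' hr
  have hv4 : v ^ 4 * (1 + r ^ 2) = 1 := by
    rw [hvdef, ← Real.rpow_natCast ((1 + r ^ 2) ^ (-(1 / 4 : ℝ))) 4,
      ← Real.rpow_mul h0.le]
    norm_num
    rw [Real.rpow_neg_one]
    field_simp
  have hv5 : (1 + r ^ 2) ^ (-(1 / 4 : ℝ) - 1) = v ^ 5 := by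
    rw [hvdef, ← Real.rpow_natCast ((1 + r ^ 2) ^ (-(1 / 4 : ℝ))) 5,
      ← Real.rpow_mul h0.le]
    norm_num
  have hv1 : v < 1 := by
    by_contra hc
    push_neg at hc
    have h4 : (1:ℝ) ≤ v ^ 4 := one_le_pow₀ hc
    nlinarith [sq_nonneg r]
  have hf : HasDerivAt f (v - r ^ 2 / 2 * v ^ 5) r := by
    have h1 : HasDerivAt (fun x : ℝ => 1 + x ^ 2) (2 * r) r := by
      simpa using ((hasDerivAt_pow 2 r).const_add 1)
    have h2 : HasDerivAt (fun x : ℝ => (1 + x ^ 2) ^ (-(1 / 4 : ℝ)))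
        (2 * r * (-(1 / 4 : ℝ)) * (1 + r ^ 2) ^ (-(1 / 4 : ℝ) - 1)) r :=
      h1.rpow_const (Or.inl h0.ne')
    have h3 : HasDerivAt f
        (1 * (1 + r ^ 2) ^ (-(1 / 4 : ℝ)) +
          r * (2 * r * (-(1 / 4 : ℝ)) * (1 + r ^ 2) ^ (-(1 / 4 : ℝ) - 1))) r :=
      (hasDerivAt_id r).mul h2
    convert h3 using 1
    rw [hv5, ← hvdef]
    ring
  have hG : HasDerivAt G ((1 * A - r * (1 / (1 + r ^ 2))) / A ^ 2) r :=
    (hasDerivAt_id r).div (Real.hasDerivAt_arctan r) hA.ne'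
  have hfr : f r = r * v := rfl
  have hGr : G r = r / A := rfl
  rw [hf.deriv, hG.deriv, hfr, hGr]
  clear_value v A
  have hf'eq : v - r ^ 2 / 2 * v ^ 5 = v * (1 + v ^ 4) / 2 := by
    linear_combination (-(v / 2)) * hv4
  have h14 : (1 : ℝ) / (1 + r ^ 2) = v ^ 4 := by
    field_simp
    linarith [hv4]
  rw [hf'eq, h14]
  have hq : 0 < 4 - 3 * v ^ 2 - 2 * v ^ 6 + v ^ 10 := by
    have h2 : v ^ 2 < 1 := by nlinarith
    have h6 : v ^ 6 ≤ v ^ 2 := by nlinarith [pow_pos hv 2, pow_pos hv 6, sq_nonneg (v^2)]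
    have h8 : v ^ 8 ≤ v ^ 2 := by nlinarith [pow_pos hv 2, pow_pos hv 8, sq_nonneg (v^3)]
    have hinner : 0 < 4 + v ^ 2 + v ^ 4 - v ^ 6 - v ^ 8 := by nlinarith [pow_pos hv 4]
    nlinarith [mul_pos (sub_pos.2 h2) hinner]
  have h5 : A - r * v ^ 4 < A * (1 - v ^ 4) := by
    nlinarith [mul_pos (sub_pos.2 hAr) (pow_pos hv 4)]
  have hfv : 0 < v * (1 + v ^ 4) / 2 * v := by positivity
  have key : 0 < (1 - (v * (1 + v ^ 4) / 2) ^ 2) * A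
      - (v * (1 + v ^ 4) / 2) * (A - r * v ^ 4) * v := by
    have t1 := mul_pos hA hq
    have t2 := mul_lt_mul_of_pos_left h5 hfv
    nlinarith [t1, t2]
  have hEq : (1 - (v * (1 + v ^ 4) / 2) ^ 2) / (r * v) ^ 2
      - v * (1 + v ^ 4) / 2 * ((1 * A - r * v ^ 4) / A ^ 2) / (r * v * (r / A))
      = ((1 - (v * (1 + v ^ 4) / 2) ^ 2) * A
          - (v * (1 + v ^ 4) / 2) * (A - r * v ^ 4) * v) / (r ^ 2 * v ^ 2 * A) := by
    field_simp
  rw [hEq]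
  exact div_pos key (by positivity)
end

section
/- For every r > 0 one has 0 ≤ G′(r) and (π/2)·G′(r) < 1, where G(r) = r/arctan r. Consequently, for every constant c ∈ (0,1), the function g(r) = (π/2)·c·G(r) satisfies 0 ≤ g′(r) < c for all r > 0. -/
open Real

/-- Key trig inequality on `(0, π/2]`. -/
lemma lemA {s : ℝ} (hs : 0 < s) (hs2 : s ≤ π / 2) : s * (π - s) < π * Real.sin s := by
  set t := s / 2 with ht_def
  have hπ := Real.pi_gt_d6
  have hπ' := Real.pi_lt_d2
  have ht : 0 < t := by positivity
  have ht1 : t ≤ 1 := by rw [ht_def]; nlinarith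
  have hsin : t - t ^ 3 / 4 < Real.sin t := by
    have := Real.sin_gt_sub_cube ht; nlinarith [pow_pos ht 3]
  have hcos : 1 - t ^ 2 / 2 ≤ Real.cos t := Real.one_sub_sq_div_two_le_cos
  have hcospos : (0:ℝ) < 1 - t ^ 2 / 2 := by nlinarith
  have hsinpos : (0:ℝ) < t - t ^ 3 / 4 := by nlinarith
  have hdouble : Real.sin s = 2 * Real.sin t * Real.cos t := by
    have : s = 2 * t := by rw [ht_def]; ring
    rw [this, Real.sin_two_mul]
  rw [hdouble]
  have ht14 : t ≤ π / 4 := by rw [ht_def]; linarith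
  have hprod : (t - t ^ 3 / 4) * (1 - t ^ 2 / 2) < Real.sin t * Real.cos t := by
    nlinarith
  have hcoef : 0 ≤ 4 - 3 * π / 2 * t := by nlinarith
  have ht5 : 0 ≤ π * (t ^ 5) := by positivity
  have hpoly : 2 * t * (π - 2 * t) ≤ π * (2 * ((t - t ^ 3 / 4) * (1 - t ^ 2 / 2))) := by
    nlinarith [mul_nonneg hcoef (sq_nonneg t), mul_nonneg (mul_nonneg hcoef (sq_nonneg t)) ht.le]
  have hs2t : s = 2 * t := by rw [ht_def]; ring
  rw [hs2t]
  nlinarith [hprod, hpoly, Real.pi_pos]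

/-- Key trig inequality on `(0, π)`. -/
lemma lemA' {s : ℝ} (hs : 0 < s) (hs2 : s < π) : s * (π - s) < π * Real.sin s := by
  rcases le_or_gt s (π / 2) with h | h
  · exact lemA hs h
  · have h1 : 0 < π - s := by linarith
    have h2 : π - s ≤ π / 2 := by linarith
    have := lemA h1 h2
    rw [Real.sin_pi_sub] at this
    nlinarith

lemma sin_cos_arctan (x : ℝ) :
    Real.sin (Real.arctan x) * Real.cos (Real.arctan x) = x / (1 + x ^ 2) := by
  rw [Real.sin_arctan, Real.cos_arctan]
  have h : (0:ℝ) < 1 + x ^ 2 := by positivity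
  have hs : Real.sqrt (1 + x ^ 2) * Real.sqrt (1 + x ^ 2) = 1 + x ^ 2 :=
    Real.mul_self_sqrt h.le
  field_simp
  rw [Real.sq_sqrt h.le]

/-- `arctan x (π/2 - arctan x) < (π/2) x/(1+x²)` for `x > 0`. -/
lemma lemB {x : ℝ} (hx : 0 < x) :
    Real.arctan x * (π / 2 - Real.arctan x) < (π / 2) * (x / (1 + x ^ 2)) := by
  set A := Real.arctan x with hA_def
  have hA : 0 < A := by rw [← Real.arctan_zero]; exact Real.arctan_strictMono hx
  have hA2 : A < π / 2 := Real.arctan_lt_pi_div_two x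
  have hs : 0 < 2 * A := by linarith
  have hs2 : 2 * A < π := by linarith
  have key := lemA' hs hs2
  have hdouble : Real.sin (2 * A) = 2 * (x / (1 + x ^ 2)) := by
    rw [Real.sin_two_mul, hA_def]
    rw [mul_assoc, sin_cos_arctan]
  rw [hdouble] at key
  nlinarith

/-- `x/(1+x²) < arctan x` for `x > 0`. -/
lemma lemC {x : ℝ} (hx : 0 < x) : x / (1 + x ^ 2) < Real.arctan x := by
  set A := Real.arctan x with hA_def
  have hA : 0 < A := by rw [← Real.arctan_zero]; exact Real.arctan_strictMono hx
  have hsin : Real.sin (2 * A) < 2 * A := Real.sin_lt (by linarith)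
  have hdouble : Real.sin (2 * A) = 2 * (x / (1 + x ^ 2)) := by
    rw [Real.sin_two_mul, hA_def, mul_assoc, sin_cos_arctan]
  rw [hdouble] at hsin
  linarith

lemma G_hasDeriv {r : ℝ} (hr : 0 < r) :
    HasDerivAt G ((Real.arctan r - r / (1 + r ^ 2)) / (Real.arctan r) ^ 2) r := by
  have hA : 0 < Real.arctan r := by rw [← Real.arctan_zero]; exact Real.arctan_strictMono hr
  have h1 : HasDerivAt (fun x : ℝ => x) 1 r := hasDerivAt_id r
  have h := h1.div (Real.hasDerivAt_arctan r) hA.ne'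
  refine h.congr_deriv ?_
  have h2 : (0:ℝ) < 1 + r ^ 2 := by positivity
  ring

/-- For `G(r) = r/arctan r`: `0 ≤ G′(r)` and `(π/2)·G′(r) < 1` for all `r > 0`;
consequently, for every `c ∈ (0,1)`, the function `g(r) = (π/2)·c·G(r)` satisfies
`0 ≤ g′(r) < c` for all `r > 0`. -/
theorem statement9 :
    (∀ r : ℝ, 0 < r → 0 ≤ deriv G r ∧ (Real.pi / 2) * deriv G r < 1) ∧
    (∀ c : ℝ, c ∈ Set.Ioo (0 : ℝ) 1 → ∀ r : ℝ, 0 < r →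
      0 ≤ deriv (fun s => (Real.pi / 2) * c * G s) r ∧
      deriv (fun s => (Real.pi / 2) * c * G s) r < c) := by
  have main : ∀ r : ℝ, 0 < r → 0 ≤ deriv G r ∧ (π / 2) * deriv G r < 1 := by
    intro r hr
    have hA : 0 < Real.arctan r := by rw [← Real.arctan_zero]; exact Real.arctan_strictMono hr
    have hd := G_hasDeriv hr
    rw [hd.deriv]
    have hnum : 0 < Real.arctan r - r / (1 + r ^ 2) := by
      have := lemC hr; linarith
    have hden : 0 < (Real.arctan r) ^ 2 := by positivity
    constructor
    · positivity
    · have hrw : π / 2 * ((Real.arctan r - r / (1 + r ^ 2)) / (Real.arctan r) ^ 2)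
          = (π / 2 * (Real.arctan r - r / (1 + r ^ 2))) / (Real.arctan r) ^ 2 := by ring
      rw [hrw, div_lt_one hden]
      have := lemB hr
      nlinarith
  refine ⟨main, ?_⟩
  intro c hc r hr
  obtain ⟨hd, hd2⟩ := main r hr
  have hdiff : DifferentiableAt ℝ G r := (G_hasDeriv hr).differentiableAt
  have heq : deriv (fun s => (π / 2) * c * G s) r = (π / 2) * c * deriv G r :=
    deriv_const_mul _ hdiff
  rw [heq]
  have hc1 : 0 < c := hc.1
  constructor
  · have : 0 ≤ π / 2 * c := by positivity
    exact mul_nonneg this hd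
  · calc π / 2 * c * deriv G r = c * (π / 2 * deriv G r) := by ring
      _ < c * 1 := by exact mul_lt_mul_of_pos_left hd2 hc1
      _ = c := mul_one c
end
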